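/- Let h be a real form of degree d in n variables whose support has exactly k monomials, and suppose h is indefinite (it attains both positive and negative values on ℝⁿ) and irreducible in ℝ[x₁,…,xₙ]. Then h² ∈ Σ_{n,2d}^k but h² ∉ Σ_{n,2d}^{k-1}. -/

import Mathlib

open MvPolynomial

section Helpers

variable {m : ℕ}

lemma continuous_finCons (b : ℝ) : Continuous fun x' : Fin m → ℝ => (Fin.cons b x' : Fin (m+1) → ℝ) := by
  refine continuous_pi fun i => ?_
  refine Fin.cases ?_ (fun j => ?_) i
  · simpa only [Fin.cons_zero] using continuous_const
  · simpa only [Fin.cons_succ] using continuous_apply j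

lemma continuous_finCons' : Continuous fun ax : ℝ × (Fin m → ℝ) => (Fin.cons ax.1 ax.2 : Fin (m+1) → ℝ) := by
  refine continuous_pi fun i => ?_
  refine Fin.cases ?_ (fun j => ?_) i
  · simpa only [Fin.cons_zero] using continuous_fst
  · simpa only [Fin.cons_succ] using (continuous_apply j).comp' continuous_snd

/-- A real multivariate polynomial vanishing on a nonempty open set is zero. -/
lemma eq_zero_of_eval_zero_on_open :
    ∀ {m : ℕ} (p : MvPolynomial (Fin m) ℝ) (U : Set (Fin m → ℝ)),
      IsOpen U → U.Nonempty → (∀ x ∈ U, eval x p = 0) → p = 0 := by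
  intro m
  induction m with
  | zero =>
    intro p U _ hne hz
    obtain ⟨x, hx⟩ := hne
    obtain ⟨c, rfl⟩ := C_surjective (Fin 0) p
    have := hz x hx
    rw [eval_C] at this
    rw [this, map_zero]
  | succ m IH =>
    intro p U hU hne hz
    obtain ⟨z, hzU⟩ := hne
    set Q := finSuccEquiv ℝ m p with hQ
    have hpre : IsOpen ((fun ax : ℝ × (Fin m → ℝ) => (Fin.cons ax.1 ax.2 : Fin (m+1) → ℝ)) ⁻¹' U) :=
      hU.preimage continuous_finCons'
    have hmem : (z 0, Fin.tail z) ∈ ((fun ax : ℝ × (Fin m → ℝ) => (Fin.cons ax.1 ax.2 : Fin (m+1) → ℝ)) ⁻¹' U) := by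
      simp only [Set.mem_preimage, Fin.cons_self_tail]
      exact hzU
    obtain ⟨V₁, V₂, hV₁, hV₂, h1m, h2m, hsub⟩ := isOpen_prod_iff.mp hpre _ _ hmem
    have hV₁inf : V₁.Infinite := by
      obtain ⟨ε, hε, hball⟩ := Metric.isOpen_iff.mp hV₁ _ h1m
      refine Set.Infinite.mono ?_ (Set.Ioo_infinite (show z 0 - ε < z 0 + ε by linarith))
      intro t ht
      apply hball
      rw [Real.ball_eq_Ioo]
      exact ht
    have hcoeff : ∀ x' ∈ V₂, ∀ i, eval x' (Q.coeff i) = 0 := by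
      intro x' hx' i
      have hq0 : Q.map (eval x') = 0 := by
        apply Polynomial.eq_zero_of_infinite_isRoot
        apply Set.Infinite.mono _ hV₁inf
        intro t ht
        simp only [Set.mem_setOf_eq, Polynomial.IsRoot.def]
        rw [← eval_eq_eval_mv_eval']
        exact hz _ (hsub (Set.mk_mem_prod ht hx'))
      have := congrArg (fun q => Polynomial.coeff q i) hq0
      simpa only [Polynomial.coeff_map, Polynomial.coeff_zero] using this
    have hQ0 : ∀ i, Q.coeff i = 0 := fun i =>
      IH (Q.coeff i) V₂ hV₂ ⟨_, h2m⟩ (fun x' hx' => hcoeff x' hx' i)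
    have : Q = 0 := Polynomial.ext fun i => by rw [hQ0 i, Polynomial.coeff_zero]
    exact (map_eq_zero_iff _ (finSuccEquiv ℝ m).injective).mp this

/-- eval of an `aeval` substitution. -/
lemma eval_aeval_self {n : ℕ} (v : Fin n → MvPolynomial (Fin n) ℝ) (x : Fin n → ℝ)
    (p : MvPolynomial (Fin n) ℝ) :
    eval x (aeval v p) = eval (fun i => eval x (v i)) p := by
  have : (eval x).comp ((aeval v : MvPolynomial (Fin n) ℝ →ₐ[ℝ] MvPolynomial (Fin n) ℝ) :
      MvPolynomial (Fin n) ℝ →+* MvPolynomial (Fin n) ℝ) = eval (fun i => eval x (v i)) := by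
    apply ringHom_ext
    · intro r; simp
    · intro i; simp
  exact RingHom.congr_fun this p

end Helpers

section FSE

variable {m : ℕ}

lemma degree_finsuppCons (i : ℕ) (d : Fin m →₀ ℕ) :
    Finsupp.degree (Finsupp.cons i d) = i + Finsupp.degree d := by
  have h1 : Finsupp.degree (Finsupp.cons i d) = Finsupp.weight 1 (Finsupp.cons i d) := by
    rw [Finsupp.degree_eq_weight_one]; rfl
  have h2 : Finsupp.degree d = Finsupp.weight 1 d := by rw [Finsupp.degree_eq_weight_one]; rfl
  rw [h1, h2]
  simp only [Finsupp.weight_apply, Pi.one_apply, smul_eq_mul, mul_one, Finsupp.sum_cons]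

/-- For a form of degree `d`, the `d`-th coefficient of `finSuccEquiv` is the constant
given by the coefficient of `X 0 ^ d`. -/
lemma finSuccEquiv_coeff_top {d : ℕ} {p : MvPolynomial (Fin (m+1)) ℝ}
    (hp : p.IsHomogeneous d) :
    (finSuccEquiv ℝ m p).coeff d = C (coeff (Finsupp.cons d 0) p) := by
  ext mon
  rw [finSuccEquiv_coeff_coeff]
  by_cases hm : mon = 0
  · subst hm
    simp [coeff_C]
  · have hdeg : (Finsupp.cons d mon).degree ≠ d := by
      rw [degree_finsuppCons]
      have : Finsupp.degree mon ≠ 0 := fun h => hm ((Finsupp.degree_eq_zero_iff mon).mp h)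
      omega
    rw [hp.coeff_eq_zero hdeg, coeff_C, if_neg (Ne.symm hm)]

lemma finSuccEquiv_natDegree_le {d : ℕ} {p : MvPolynomial (Fin (m+1)) ℝ}
    (hp : p.IsHomogeneous d) (hp0 : p ≠ 0) :
    (finSuccEquiv ℝ m p).natDegree ≤ d := by
  rw [natDegree_finSuccEquiv]
  calc degreeOf 0 p ≤ p.totalDegree := degreeOf_le_totalDegree p 0
  _ = d := hp.totalDegree hp0

lemma eval_cons_one_zero {d : ℕ} {p : MvPolynomial (Fin (m+1)) ℝ}
    (hp : p.IsHomogeneous d) :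
    eval (Fin.cons 1 (0 : Fin m → ℝ)) p = coeff (Finsupp.cons d 0) p := by
  by_cases hp0 : p = 0
  · simp [hp0]
  rw [eval_eq_eval_mv_eval']
  have hnd : (Polynomial.map (eval (0 : Fin m → ℝ)) (finSuccEquiv ℝ m p)).natDegree < d + 1 :=
    lt_of_le_of_lt (le_trans Polynomial.natDegree_map_le
      (finSuccEquiv_natDegree_le hp hp0)) (Nat.lt_succ_self d)
  rw [Polynomial.eval_eq_sum_range' hnd]
  simp only [one_pow, mul_one, Polynomial.coeff_map]
  rw [Finset.sum_eq_single d]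
  · rw [finSuccEquiv_coeff_top hp]
    simp
  · intro i hi hne
    have hilt : i < d := lt_of_le_of_ne (Nat.lt_succ_iff.mp (Finset.mem_range.mp hi)) hne
    have hhom := hp.finSuccEquiv_coeff_isHomogeneous i (d - i) (by omega)
    have : constantCoeff ((finSuccEquiv ℝ m p).coeff i) = 0 := by
      apply hhom.coeff_eq_zero
      simp only [map_zero]
      omega
    rw [eval_zero]
    exact this
  · intro hd
    exact absurd (Finset.self_mem_range_succ d) hd

section Shear

variable {m : ℕ}

noncomputable def shearV (y : Fin (m+1) → ℝ) : Fin (m+1) → MvPolynomial (Fin (m+1)) ℝ :=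
  fun i => if i = 0 then C (y 0) * X 0 else X i + C (y i) * X 0

noncomputable def shearW (y : Fin (m+1) → ℝ) : Fin (m+1) → MvPolynomial (Fin (m+1)) ℝ :=
  fun i => if i = 0 then C (y 0)⁻¹ * X 0 else X i - C (y i) * (C (y 0)⁻¹ * X 0)

noncomputable def shearEquiv (y : Fin (m+1) → ℝ) (hy0 : y 0 ≠ 0) :
    MvPolynomial (Fin (m+1)) ℝ ≃ₐ[ℝ] MvPolynomial (Fin (m+1)) ℝ := by
  have hinv : (C (y 0)⁻¹ : MvPolynomial (Fin (m+1)) ℝ) * C (y 0) = 1 := by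
    rw [← C_mul, inv_mul_cancel₀ hy0, C_1]
  have hinv' : (C (y 0) : MvPolynomial (Fin (m+1)) ℝ) * C (y 0)⁻¹ = 1 := by
    rw [← C_mul, mul_inv_cancel₀ hy0, C_1]
  refine AlgEquiv.ofAlgHom (aeval (shearV y)) (aeval (shearW y)) ?_ ?_
  · apply MvPolynomial.algHom_ext
    intro i
    simp only [AlgHom.comp_apply, aeval_X, AlgHom.id_apply]
    by_cases hi : i = 0
    · subst hi
      simp only [shearW, eq_self_iff_true, if_true, map_mul, aeval_X, aeval_C, algebraMap_eq, shearV, eq_self_iff_true, if_true]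
      linear_combination (X (0 : Fin (m+1)) : MvPolynomial (Fin (m+1)) ℝ) * hinv
    · simp only [shearW, if_neg hi, map_sub, map_mul, aeval_X, aeval_C, algebraMap_eq, shearV,
        eq_self_iff_true, if_true, if_neg hi]
      linear_combination (-(C (y i) * X (0 : Fin (m+1))) : MvPolynomial (Fin (m+1)) ℝ) * hinv
  · apply MvPolynomial.algHom_ext
    intro i
    simp only [AlgHom.comp_apply, aeval_X, AlgHom.id_apply]
    by_cases hi : i = 0
    · subst hi
      simp only [shearV, eq_self_iff_true, if_true, map_mul, aeval_X, aeval_C, algebraMap_eq, shearW, eq_self_iff_true, if_true]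
      linear_combination (X (0 : Fin (m+1)) : MvPolynomial (Fin (m+1)) ℝ) * hinv'
    · simp only [shearV, if_neg hi, map_add, map_mul, aeval_X, aeval_C, algebraMap_eq, shearW,
        eq_self_iff_true, if_true, if_neg hi]
      ring

lemma shearEquiv_apply (y : Fin (m+1) → ℝ) (hy0 : y 0 ≠ 0) (p : MvPolynomial (Fin (m+1)) ℝ) :
    shearEquiv y hy0 p = aeval (shearV y) p := rfl

/-- The affine change of evaluation point corresponding to the shear. -/
noncomputable def shearPt (y : Fin (m+1) → ℝ) (x : Fin (m+1) → ℝ) : Fin (m+1) → ℝ :=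
  fun i => if i = 0 then y 0 * x 0 else x i + y i * x 0

lemma shear_eval (y : Fin (m+1) → ℝ) (hy0 : y 0 ≠ 0) (x : Fin (m+1) → ℝ)
    (p : MvPolynomial (Fin (m+1)) ℝ) :
    eval x (shearEquiv y hy0 p) = eval (shearPt y x) p := by
  rw [shearEquiv_apply, eval_aeval_self]
  have : (fun i => eval x (shearV y i)) = shearPt y x := by
    funext i
    by_cases hi : i = 0
    · subst hi; simp [shearV, shearPt]
    · simp [shearV, shearPt, if_neg hi]
  rw [this]

lemma shearPt_surjective (y : Fin (m+1) → ℝ) (hy0 : y 0 ≠ 0) (b : Fin (m+1) → ℝ) :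
    ∃ x, shearPt y x = b := by
  refine ⟨Fin.cons (b 0 / y 0) (fun j => b j.succ - y j.succ * (b 0 / y 0)), ?_⟩
  funext i
  refine Fin.cases ?_ (fun j => ?_) i
  · simp only [shearPt, if_pos rfl, Fin.cons_zero]
    rw [mul_comm]
    exact div_mul_cancel₀ _ hy0
  · simp only [shearPt, if_neg (Fin.succ_ne_zero j), Fin.cons_succ, Fin.cons_zero]
    ring

lemma shear_eval_one_zero (y : Fin (m+1) → ℝ) (hy0 : y 0 ≠ 0) (p : MvPolynomial (Fin (m+1)) ℝ) :
    eval (Fin.cons 1 (0 : Fin m → ℝ)) (shearEquiv y hy0 p) = eval y p := by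
  rw [shear_eval]
  have : shearPt y (Fin.cons 1 (0 : Fin m → ℝ)) = y := by
    funext i
    refine Fin.cases ?_ (fun j => ?_) i
    · simp [shearPt]
    · simp [shearPt, if_neg (Fin.succ_ne_zero j)]
  rw [this]

lemma shear_isHomogeneous (y : Fin (m+1) → ℝ) (hy0 : y 0 ≠ 0) {p : MvPolynomial (Fin (m+1)) ℝ}
    {d : ℕ} (hp : p.IsHomogeneous d) : (shearEquiv y hy0 p).IsHomogeneous d := by
  rw [shearEquiv_apply]
  have hsv : ∀ i, ((shearV y) i).IsHomogeneous 1 := by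
    intro i
    by_cases hi : i = 0
    · subst hi
      simpa [shearV] using (isHomogeneous_X ℝ (0 : Fin (m+1))).C_mul (y 0)
    · simp only [shearV, if_neg hi]
      exact (isHomogeneous_X ℝ i).add ((isHomogeneous_X ℝ (0 : Fin (m+1))).C_mul (y i))
  have := hp.aeval (shearV y) hsv
  rwa [one_mul] at this

end Shear

section Divisibility

/-- If `f` and `h` are homogeneous of the same degree and `h ∣ f`, then `f` is a constant
multiple of `h`. -/
lemma eq_C_mul_of_dvd_of_homogeneous {σ : Type*} {d : ℕ} {h f : MvPolynomial σ ℝ}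
    (hh : h.IsHomogeneous d) (hf : f.IsHomogeneous d) (hdvd : h ∣ f) :
    ∃ c : ℝ, f = C c * h := by
  obtain ⟨g, rfl⟩ := hdvd
  refine ⟨coeff 0 g, ?_⟩
  have step1 : homogeneousComponent d (h * g) = h * g :=
    (homogeneousComponent_of_mem ((mem_homogeneousSubmodule _ _).mpr hf)).trans (if_pos rfl)
  have step2 : h * g = ∑ i ∈ Finset.range (g.totalDegree + 1), h * homogeneousComponent i g := by
    rw [← Finset.mul_sum, sum_homogeneousComponent]
  have step3 : homogeneousComponent d (h * g)
      = ∑ i ∈ Finset.range (g.totalDegree + 1), homogeneousComponent d (h * homogeneousComponent i g) := by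
    rw [step2, map_sum]
  have step4 : ∀ i, homogeneousComponent d (h * homogeneousComponent i g)
      = if d = d + i then h * homogeneousComponent i g else 0 := by
    intro i
    exact homogeneousComponent_of_mem ((mem_homogeneousSubmodule _ _).mpr
      (hh.mul (homogeneousComponent_isHomogeneous i g)))
  have step5 : homogeneousComponent d (h * g) = h * homogeneousComponent 0 g := by
    rw [step3, Finset.sum_eq_single_of_mem 0 (Finset.mem_range.mpr (Nat.succ_pos _))]
    · rw [step4 0, if_pos (by omega)]
    · intro i _ hi
      rw [step4 i, if_neg (by omega)]
  rw [← step1, step5, homogeneousComponent_zero]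
  ring

/-- Descend divisibility by a monic polynomial along the fraction-field map. -/
lemma monic_dvd_of_map_dvd {R : Type*} [CommRing R] [IsDomain R] (K : Type*) [Field K]
    [Algebra R K] [IsFractionRing R K] {P F : Polynomial R} (hP : P.Monic)
    (hdvd : P.map (algebraMap R K) ∣ F.map (algebraMap R K)) : P ∣ F := by
  rw [← Polynomial.modByMonic_eq_zero_iff_dvd hP]
  by_contra hne
  have hinj : Function.Injective (algebraMap R K) := IsFractionRing.injective R K
  have hmap0 : (F %ₘ P).map (algebraMap R K) ≠ 0 := fun h0 =>
    hne (Polynomial.map_injective _ hinj (by rw [h0, Polynomial.map_zero]))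
  have hdvd2 : P.map (algebraMap R K) ∣ (F %ₘ P).map (algebraMap R K) := by
    have heq : F %ₘ P = F - P * (F /ₘ P) := by
      have := Polynomial.modByMonic_add_div F P
      linear_combination this
    rw [heq, Polynomial.map_sub, Polynomial.map_mul]
    exact dvd_sub hdvd (Dvd.intro _ rfl)
  have hle := Polynomial.degree_le_of_dvd hdvd2 hmap0
  have hlt : ((F %ₘ P).map (algebraMap R K)).degree < (P.map (algebraMap R K)).degree := by
    calc ((F %ₘ P).map (algebraMap R K)).degree ≤ (F %ₘ P).degree := Polynomial.degree_map_le
    _ < P.degree := Polynomial.degree_modByMonic_lt F hP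
    _ = (P.map (algebraMap R K)).degree := (hP.degree_map _).symm
  exact absurd hle (not_le.mpr hlt)

end Divisibility

section Key

open Polynomial in
/-- **Key lemma**: if `h` is an irreducible form of degree `d ≥ 1` whose `X 0 ^ d` coefficient
`cc` is nonzero, `h` takes a value of sign opposite to `cc` somewhere, and `f` vanishes at every
real zero of `h`, then `h ∣ f`. -/
lemma key_dvd {m d : ℕ} (hd : 1 ≤ d) (h f : MvPolynomial (Fin (m+1)) ℝ)
    (hhom : h.IsHomogeneous d) (hirr : Irreducible h)
    (hcc : coeff (Finsupp.cons d (0 : Fin m →₀ ℕ)) h ≠ 0)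
    (hsign : ∃ b, coeff (Finsupp.cons d (0 : Fin m →₀ ℕ)) h * eval b h < 0)
    (hvanish : ∀ z, eval z h = 0 → eval z f = 0) : h ∣ f := by
  by_contra hndvd
  set cc := coeff (Finsupp.cons d (0 : Fin m →₀ ℕ)) h with hccdef
  set P := finSuccEquiv ℝ m h with hPdef
  set F := finSuccEquiv ℝ m f with hFdef
  have hh0 : h ≠ 0 := fun h0 => hcc (by rw [hccdef, h0, MvPolynomial.coeff_zero])
  have hPcoeffd : P.coeff d = MvPolynomial.C cc := finSuccEquiv_coeff_top hhom
  have hCcc : (MvPolynomial.C cc : MvPolynomial (Fin m) ℝ) ≠ 0 := by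
    simpa using hcc
  have hPdeg : P.natDegree = d :=
    le_antisymm (finSuccEquiv_natDegree_le hhom hh0)
      (Polynomial.le_natDegree_of_ne_zero (by rw [hPcoeffd]; exact hCcc))
  -- monicized version of `P`
  set P' : Polynomial (MvPolynomial (Fin m) ℝ) := Polynomial.C (MvPolynomial.C cc⁻¹) * P with hP'def
  have hCCmul : Polynomial.C (MvPolynomial.C cc : MvPolynomial (Fin m) ℝ) *
      Polynomial.C (MvPolynomial.C cc⁻¹) = 1 := by
    rw [← Polynomial.C_mul, ← MvPolynomial.C_mul, mul_inv_cancel₀ hcc, MvPolynomial.C_1,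
      Polynomial.C_1]
  have hP'coeff : ∀ i, P'.coeff i = MvPolynomial.C cc⁻¹ * P.coeff i := fun i =>
    Polynomial.coeff_C_mul _
  have hP'le : P'.natDegree ≤ d := by
    apply Polynomial.natDegree_le_iff_coeff_eq_zero.mpr
    intro i hi
    rw [hP'coeff i, Polynomial.coeff_eq_zero_of_natDegree_lt (hPdeg ▸ hi), mul_zero]
  have hP'coeffd : P'.coeff d = 1 := by
    rw [hP'coeff d, hPcoeffd, ← MvPolynomial.C_mul, inv_mul_cancel₀ hcc, MvPolynomial.C_1]
  have hP'monic : P'.Monic := Polynomial.monic_of_natDegree_le_of_coeff_eq_one d hP'le hP'coeffd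
  have hP'deg : P'.natDegree = d :=
    le_antisymm hP'le (Polynomial.le_natDegree_of_ne_zero (by rw [hP'coeffd]; exact one_ne_zero))
  -- ¬ P' ∣ F
  have hPF : ¬ P' ∣ F := by
    intro hdvd
    apply hndvd
    have h1 : P ∣ F := by
      refine dvd_trans ⟨Polynomial.C (MvPolynomial.C cc⁻¹), ?_⟩ hdvd
      rw [hP'def, mul_comm]
    have h2 := map_dvd (finSuccEquiv ℝ m).symm h1
    rwa [hPdef, hFdef, AlgEquiv.symm_apply_apply, AlgEquiv.symm_apply_apply] at h2
  -- move to the fraction field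
  set K := FractionRing (MvPolynomial (Fin m) ℝ)
  set φ : MvPolynomial (Fin m) ℝ →+* K := algebraMap (MvPolynomial (Fin m) ℝ) K with hφdef
  have hφinj : Function.Injective φ := IsFractionRing.injective _ _
  have hirrP : Irreducible P := hirr.map (finSuccEquiv ℝ m)
  have hassoc : Associated P P' := by
    refine ⟨(IsUnit.of_mul_eq_one (a := Polynomial.C (MvPolynomial.C cc⁻¹))
      (Polynomial.C (MvPolynomial.C cc)) (by rw [mul_comm]; exact hCCmul)).unit, ?_⟩
    rw [IsUnit.unit_spec, hP'def, mul_comm]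
  have hirrP' : Irreducible P' := hassoc.irreducible hirrP
  have hirrPk : Irreducible (P'.map φ) :=
    (hP'monic.irreducible_iff_irreducible_map_fraction_map (K := K)).mp hirrP'
  have hndvdK : ¬ P'.map φ ∣ F.map φ := fun hdvd => hPF (monic_dvd_of_map_dvd K hP'monic hdvd)
  have hcop : IsCoprime (P'.map φ) (F.map φ) := (hirrPk.coprime_iff_not_dvd).mpr hndvdK
  obtain ⟨u, v, huv⟩ := hcop
  obtain ⟨s, hs⟩ := IsLocalization.integerNormalization_map_to_map
    (nonZeroDivisors (MvPolynomial (Fin m) ℝ)) u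
  obtain ⟨t, ht⟩ := IsLocalization.integerNormalization_map_to_map
    (nonZeroDivisors (MvPolynomial (Fin m) ℝ)) v
  set U := IsLocalization.integerNormalization (nonZeroDivisors (MvPolynomial (Fin m) ℝ)) u
  set V := IsLocalization.integerNormalization (nonZeroDivisors (MvPolynomial (Fin m) ℝ)) v
  set r : MvPolynomial (Fin m) ℝ := (s : MvPolynomial (Fin m) ℝ) * (t : MvPolynomial (Fin m) ℝ)
    with hrdef
  have hrne : r ≠ 0 := mul_ne_zero (nonZeroDivisors.coe_ne_zero s) (nonZeroDivisors.coe_ne_zero t)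
  have hsmul : ∀ (a : MvPolynomial (Fin m) ℝ) (q : Polynomial K),
      a • q = Polynomial.C (φ a) * q := by
    intro a q
    rw [Algebra.smul_def, IsScalarTower.algebraMap_apply (MvPolynomial (Fin m) ℝ) K (Polynomial K),
      Polynomial.algebraMap_eq]
  have key_identity : Polynomial.C (t : MvPolynomial (Fin m) ℝ) * U * P' +
      Polynomial.C (s : MvPolynomial (Fin m) ℝ) * V * F =
      Polynomial.C r := by
    apply Polynomial.map_injective φ hφinj
    rw [← hφdef] at hs ht
    simp only [Polynomial.map_add, Polynomial.map_mul, Polynomial.map_C, hs, ht, hsmul, hrdef,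
      map_mul, Polynomial.C_mul]
    linear_combination (Polynomial.C (φ (s : MvPolynomial (Fin m) ℝ)) *
      Polynomial.C (φ (t : MvPolynomial (Fin m) ℝ))) * huv
  -- the analytic part
  obtain ⟨bpt, hbpt⟩ := hsign
  set b0 := bpt 0 with hb0
  set b' := Fin.tail bpt with hb'
  have hbpt' : (Fin.cons b0 b' : Fin (m+1) → ℝ) = bpt := Fin.cons_self_tail bpt
  set W : Set (Fin m → ℝ) := {x' | cc * eval (Fin.cons b0 x') h < 0} with hWdef
  have hWopen : IsOpen W := isOpen_lt
    (continuous_const.mul ((MvPolynomial.continuous_eval h).comp (continuous_finCons b0)))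
    continuous_const
  have hWne : W.Nonempty := ⟨b', by simp only [hWdef, Set.mem_setOf_eq]; rw [hbpt']; exact hbpt⟩
  have hr0 : ∀ x' ∈ W, eval x' r = 0 := by
    intro x' hx'
    set q : Polynomial ℝ := P'.map (MvPolynomial.eval x') with hqdef
    have hqmonic : q.Monic := hP'monic.map _
    have hqeval : ∀ tt : ℝ, q.eval tt = cc⁻¹ * eval (Fin.cons tt x') h := by
      intro tt
      rw [eval_eq_eval_mv_eval' x' tt h]
      rw [hqdef, hP'def, Polynomial.map_mul, Polynomial.map_C, Polynomial.eval_mul,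
        Polynomial.eval_C, MvPolynomial.eval_C]
    have hneg : q.eval b0 < 0 := by
      have h1 : cc * eval (Fin.cons b0 x') h < 0 := hx'
      have hcc2 : (0:ℝ) < cc * cc := mul_self_pos.mpr hcc
      have h2 : cc⁻¹ * eval (Fin.cons b0 x') h
          = (cc * eval (Fin.cons b0 x') h) / (cc * cc) := by
        field_simp
      rw [hqeval b0, h2]
      exact div_neg_of_neg_of_pos h1 hcc2
    have hq0lt : (0:ℕ) < q.natDegree := by
      have : q.natDegree = d := by rw [hqdef, hP'monic.natDegree_map]; exact hP'deg
      omega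
    have htend := Polynomial.tendsto_atTop_of_leadingCoeff_nonneg q
      (Polynomial.natDegree_pos_iff_degree_pos.mp hq0lt)
      (by rw [hqmonic.leadingCoeff]; norm_num)
    obtain ⟨T, hT⟩ := ((htend.eventually_ge_atTop 0).and (Filter.eventually_ge_atTop b0)).exists
    obtain ⟨α, hαI, hα0⟩ := (intermediate_value_Icc hT.2 q.continuous.continuousOn)
      (Set.mem_Icc.mpr ⟨hneg.le, hT.1⟩)
    have hz : eval (Fin.cons α x') h = 0 := by
      have h3 : cc⁻¹ * eval (Fin.cons α x') h = 0 := by rw [← hqeval α]; exact hα0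
      exact (mul_eq_zero.mp h3).resolve_left (inv_ne_zero hcc)
    have hfz : eval (Fin.cons α x') f = 0 := hvanish _ hz
    have happ := congrArg
      (fun (Q : Polynomial (MvPolynomial (Fin m) ℝ)) =>
        Polynomial.eval α (Q.map (MvPolynomial.eval x'))) key_identity
    simp only [Polynomial.map_add, Polynomial.map_mul, Polynomial.map_C, Polynomial.eval_add,
      Polynomial.eval_mul, Polynomial.eval_C] at happ
    have hPterm : Polynomial.eval α (P'.map (MvPolynomial.eval x')) = 0 := by
      rw [← hqdef]; exact hα0
    have hFterm : Polynomial.eval α (F.map (MvPolynomial.eval x')) = 0 := by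
      rw [hFdef, ← eval_eq_eval_mv_eval']; exact hfz
    rw [hPterm, hFterm, mul_zero, mul_zero, add_zero] at happ
    exact happ.symm ▸ rfl
  exact hrne (eq_zero_of_eval_zero_on_open r W hWopen hWne hr0)

end Key

/-- `F_{n,d}^k`: real forms of degree `d` in `n` variables with at most `k` monomials. -/
def IsFormK (n d k : ℕ) (h : MvPolynomial (Fin n) ℝ) : Prop :=
  h.IsHomogeneous d ∧ h.support.card ≤ k

/-- `Σ_{n,2d}^k`: finite sums of squares of forms in `F_{n,d}^k`. -/
def SigmaSOS (n d k : ℕ) : Set (MvPolynomial (Fin n) ℝ) :=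
  { p | ∃ (m : ℕ) (f : Fin m → MvPolynomial (Fin n) ℝ),
      (∀ j, IsFormK n d k (f j)) ∧ p = ∑ j, (f j) ^ 2 }

theorem sq_mem_sigma_k_not_sigma_pred (n d k : ℕ)
    (h : MvPolynomial (Fin n) ℝ) (hhom : h.IsHomogeneous d)
    (hcard : h.support.card = k)
    (hindef : ∃ a b : Fin n → ℝ, 0 < eval a h ∧ eval b h < 0)
    (hirr : Irreducible h) :
    h ^ 2 ∈ SigmaSOS n d k ∧ h ^ 2 ∉ SigmaSOS n d (k - 1) := by
  obtain ⟨a, b, ha, hb⟩ := hindef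
  constructor
  · exact ⟨1, fun _ => h, fun j => ⟨hhom, hcard.le⟩, by simp⟩
  · rintro ⟨M, f, hforms, heq⟩
    cases n with
    | zero =>
      have hab : a = b := Subsingleton.elim a b
      rw [hab] at ha; linarith
    | succ m =>
      have hh0 : h ≠ 0 := by rintro rfl; rw [map_zero] at ha; linarith
      have hk1 : 1 ≤ k := by
        rw [← hcard]
        exact Finset.card_pos.mpr (support_nonempty.mpr hh0)
      have hd1 : 1 ≤ d := by
        by_contra hd0
        have hd0' : d = 0 := by omega
        subst hd0'
        have hhC : h = C (coeff 0 h) := by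
          ext u
          by_cases hu : u = 0
          · subst hu; simp
          · rw [hhom.coeff_eq_zero (fun hdeg => hu ((Finsupp.degree_eq_zero_iff u).mp hdeg)),
              coeff_C, if_neg (Ne.symm hu)]
        rw [hhC, eval_C] at ha hb
        linarith
      -- choose a point with `h y ≠ 0` and `y 0 ≠ 0`
      have hXh : X (0 : Fin (m+1)) * h ≠ 0 := mul_ne_zero (X_ne_zero 0) hh0
      have hex_y : ¬ ∀ x, eval x (X (0 : Fin (m+1)) * h) = 0 := by
        intro hall
        exact hXh (MvPolynomial.funext fun x => by rw [hall x, map_zero])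
      push_neg at hex_y
      obtain ⟨y, hy⟩ := hex_y
      have hy0 : y 0 ≠ 0 := fun h0 => hy (by rw [eval_mul, eval_X, h0, zero_mul])
      have hyh : eval y h ≠ 0 := fun h0 => hy (by rw [eval_mul, h0, mul_zero])
      set T := shearEquiv y hy0 with hT
      set h' := T h with hh'
      have hhom' : h'.IsHomogeneous d := shear_isHomogeneous y hy0 hhom
      have hirr' : Irreducible h' := hirr.map T
      have hcc : coeff (Finsupp.cons d (0 : Fin m →₀ ℕ)) h' ≠ 0 := by
        rw [← eval_cons_one_zero hhom', hh', hT, shear_eval_one_zero]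
        exact hyh
      have heq' : h' ^ 2 = ∑ j, (T (f j)) ^ 2 := by
        rw [hh', ← map_pow, heq, map_sum]
        simp only [map_pow]
      have hvanish : ∀ z, eval z h' = 0 → ∀ j, eval z (T (f j)) = 0 := by
        intro z hz j
        have h1 : eval z (h' ^ 2) = 0 := by rw [map_pow, hz]; ring
        rw [heq', map_sum] at h1
        simp only [map_pow] at h1
        have h2 := (Finset.sum_eq_zero_iff_of_nonneg
          (fun j _ => sq_nonneg (eval z (T (f j))))).mp h1 j (Finset.mem_univ j)
        exact pow_eq_zero_iff two_ne_zero |>.mp h2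
      have hsign : ∃ bb, coeff (Finsupp.cons d (0 : Fin m →₀ ℕ)) h' * eval bb h' < 0 := by
        rcases lt_or_gt_of_ne hcc with hlt | hgt
        · obtain ⟨x, hx⟩ := shearPt_surjective y hy0 a
          refine ⟨x, ?_⟩
          rw [hh', hT, shear_eval, hx]
          exact mul_neg_of_neg_of_pos hlt ha
        · obtain ⟨x, hx⟩ := shearPt_surjective y hy0 b
          refine ⟨x, ?_⟩
          rw [hh', hT, shear_eval, hx]
          exact mul_neg_of_pos_of_neg hgt hb
      have hdvd : ∀ j, h ∣ f j := by
        intro j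
        have h1 := key_dvd hd1 h' (T (f j)) hhom' hirr' hcc hsign (fun z hz => hvanish z hz j)
        have h2 := map_dvd T.symm h1
        rwa [hh', AlgEquiv.symm_apply_apply, AlgEquiv.symm_apply_apply] at h2
      have hconst : ∀ j, ∃ c : ℝ, f j = C c * h := fun j =>
        eq_C_mul_of_dvd_of_homogeneous hhom (hforms j).1 (hdvd j)
      choose c hc using hconst
      have hsum1 : (∑ j, C (c j ^ 2) : MvPolynomial (Fin (m+1)) ℝ) * h ^ 2 = 1 * h ^ 2 := by
        calc (∑ j, C (c j ^ 2) : MvPolynomial (Fin (m+1)) ℝ) * h ^ 2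
            = ∑ j, (C (c j) * h) ^ 2 := by
              rw [Finset.sum_mul]
              refine Finset.sum_congr rfl fun j _ => ?_
              rw [mul_pow, ← C_pow]
          _ = ∑ j, (f j) ^ 2 := Finset.sum_congr rfl fun j _ => by rw [← hc j]
          _ = h ^ 2 := heq.symm
          _ = 1 * h ^ 2 := (one_mul _).symm
      have hC1 : (∑ j, C (c j ^ 2) : MvPolynomial (Fin (m+1)) ℝ) = 1 :=
        mul_right_cancel₀ (pow_ne_zero 2 hh0) hsum1
      have hsumc : (∑ j, (c j) ^ 2) = 1 := by
        apply C_injective (Fin (m+1)) ℝ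
        rw [map_sum, hC1, C_1]
      have hexc : ∃ j, c j ≠ 0 := by
        by_contra hall
        push_neg at hall
        rw [Finset.sum_eq_zero (fun j _ => by rw [hall j]; ring)] at hsumc
        linarith
      obtain ⟨j, hcj⟩ := hexc
      have hsupp : (f j).support = h.support := by
        rw [hc j]
        ext u
        simp only [mem_support_iff, coeff_C_mul, ne_eq, mul_eq_zero, not_or]
        tauto
      have hcard' := (hforms j).2
      rw [hsupp, hcard] at hcard'
      omega
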